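/- arXiv:1905.08984 — 3 statements merged into one kernel-verified Lean document; each statement's English description precedes it below -/
import Mathlib

section
/- Let K be an algebraically closed field equipped with a nonarchimedean absolute value |·| : K → ℝ, let p ≥ 2 be an integer, let m be a natural number, and let α, ξ ∈ K with |α| = 1 and |ξ| ≤ 1. Then for every c ∈ K with |c| ≤ 1 there exists a ∈ K with |a| ≤ 1 such that α^m · a^p − ξ^m · a = c. In other words, the map a ↦ α^m a^p − ξ^m a from the valuation ring O = {x ∈ K : |x| ≤ 1} to itself is surjective. -/
open Polynomial

private lemma multiset_one_lt_prod (s : Multiset ℝ) (hs : s ≠ 0) (h : ∀ x ∈ s, 1 < x) :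
    1 < s.prod := by
  induction s using Multiset.induction with
  | empty => simp at hs
  | cons a s ih =>
    rcases eq_or_ne s 0 with rfl | hne
    · simpa using h a (by simp)
    · have h1 : 1 < a := h a (Multiset.mem_cons_self a s)
      have h2 : 1 < s.prod := ih hne (fun x hx => h x (Multiset.mem_cons_of_mem hx))
      simp only [Multiset.prod_cons]
      nlinarith

/-- Let `K` be an algebraically closed field with a nonarchimedean absolute value,
`p ≥ 2`, `m : ℕ`, and `α, ξ ∈ K` with `|α| = 1` and `|ξ| ≤ 1`. Then for every `c` with
`|c| ≤ 1` there exists `a` with `|a| ≤ 1` such that `α^m · a^p − ξ^m · a = c`. -/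
theorem stmt1 {K : Type*} [Field K] [IsAlgClosed K] (v : AbsoluteValue K ℝ)
    (hna : IsNonarchimedean v) (p : ℕ) (hp : 2 ≤ p) (m : ℕ)
    (α ξ : K) (hα : v α = 1) (hξ : v ξ ≤ 1) :
    ∀ c : K, v c ≤ 1 → ∃ a : K, v a ≤ 1 ∧ α ^ m * a ^ p - ξ ^ m * a = c := by
  intro c hc
  have hα0 : α ≠ 0 := by
    intro h; rw [h] at hα; simp at hα
  have hαm0 : α ^ m ≠ 0 := pow_ne_zero _ hα0
  set P : K[X] := C (α ^ m) * X ^ p - C (ξ ^ m) * X - C c with hP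
  have hp0 : p ≠ 0 := by omega
  have hp1 : p ≠ 1 := by omega
  have hdeg : P.natDegree = p := by
    rw [hP]
    compute_degree!
    · simp only [hp1, hp0, if_false]
      simpa using hαm0
    all_goals omega
  have hcoeff : P.coeff p = α ^ m := by
    simp only [hP, coeff_sub, coeff_C_mul, coeff_X_pow, coeff_C, coeff_X, if_pos rfl,
      if_neg hp0, if_neg (Ne.symm hp1)]
    simp
  have hPne : P ≠ 0 := fun h => hαm0 (by simp [h] at hcoeff; exact hcoeff.symm)
  have hsplit : P.Splits := IsAlgClosed.splits P
  have hcard : P.roots.card = p := by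
    rw [(splits_iff_card_roots).mp hsplit, hdeg]
  have hlc : P.leadingCoeff = α ^ m := by
    rw [leadingCoeff, hdeg, hcoeff]
  have heq := hsplit.eq_prod_roots
  -- evaluate at 0
  have hev : -c = P.leadingCoeff * (P.roots.map fun a => -a).prod := by
    have := congrArg (Polynomial.eval 0) heq
    simpa [hP, eval_multiset_prod, Multiset.map_map, Function.comp, hp0] using this
  have hvprod : (P.roots.map v).prod = v c := by
    have := congrArg v hev
    rw [v.map_neg, v.map_mul, hlc, v.map_pow, hα, one_pow, one_mul,
      map_multiset_prod v, Multiset.map_map] at this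
    simp only [Function.comp, v.map_neg] at this
    exact this.symm
  have hne : P.roots ≠ 0 := by
    intro h; rw [h] at hcard; simp at hcard; omega
  have : ∃ a ∈ P.roots, v a ≤ 1 := by
    by_contra h
    push_neg at h
    have h1 : 1 < (P.roots.map v).prod := by
      apply multiset_one_lt_prod
      · simpa using hne
      · intro x hx
        obtain ⟨a, ha, rfl⟩ := Multiset.mem_map.mp hx
        exact h a ha
    rw [hvprod] at h1
    linarith
  obtain ⟨a, ha, hva⟩ := this
  refine ⟨a, hva, ?_⟩
  have hroot : P.eval a = 0 := (mem_roots hPne).mp ha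
  have : α ^ m * a ^ p - ξ ^ m * a - c = 0 := by
    simpa [hP] using hroot
  linear_combination this
end

section
/- Let p be a prime number, let B and C be commutative rings of characteristic p, let g : B → C be a surjective ring homomorphism with kernel J, and assume that B is complete and separated in the J-adic topology (i.e., B is J-adically complete). Then there exists a unique ring homomorphism f : C^♭ → B from the inverse limit perfection C^♭ = lim_φ C to B with the following property: for every a = (x_0, x_1, …) ∈ C^♭, every natural number n, and every y ∈ B with g(y) = x_n, one has f(a) − y^{p^n} ∈ J^{n+1}. In particular g(f(a)) = x_0 for all a ∈ C^♭. -/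
/-- Let `p` be prime, `B, C` commutative rings of characteristic `p`, `g : B → C` a
surjective ring homomorphism with kernel `J`, and assume `B` is `J`-adically complete.
Then there is a unique ring homomorphism `f : C^♭ → B` from the inverse limit perfection
such that for every `a ∈ C^♭`, every `n`, and every lift `y ∈ B` of the `n`-th component
of `a`, one has `f a − y^(p^n) ∈ J^(n+1)`; in particular `g (f a)` is the `0`-th
component of `a`. -/
theorem stmt8 (p : ℕ) [Fact p.Prime] {B C : Type*} [CommRing B] [CommRing C]
    [CharP B p] [CharP C p] (g : B →+* C) (hg : Function.Surjective g)
    [IsAdicComplete (RingHom.ker g) B] :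
    ∃! f : Perfection C p →+* B,
      (∀ (a : Perfection C p) (n : ℕ) (y : B), g y = Perfection.coeff C p n a →
        f a - y ^ p ^ n ∈ RingHom.ker g ^ (n + 1)) ∧
      ∀ a : Perfection C p, g (f a) = Perfection.coeff C p 0 a := by
  set J := RingHom.ker g with hJ
  have hp1 : 1 < p := (Fact.out : p.Prime).one_lt
  -- key: equal images ⇒ p^n-th powers agree mod J^(n+1)
  have key : ∀ (y y' : B) (n : ℕ), g y = g y' → y ^ p ^ n - y' ^ p ^ n ∈ J ^ (n + 1) := by
    intro y y' n h
    rw [← sub_pow_char_pow]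
    refine Ideal.pow_le_pow_right (Nat.succ_le_of_lt (Nat.lt_pow_self hp1 : n < p ^ n))
      (Ideal.pow_mem_pow ?_ _)
    simpa [hJ, RingHom.mem_ker, sub_eq_zero] using h
  -- the smul-top submodules are just the ideals
  have hst : ∀ n : ℕ, (J ^ n • ⊤ : Submodule B B) = J ^ n := fun n => by
    rw [smul_eq_mul, Ideal.mul_top]
  -- a section of g
  obtain ⟨s, hs⟩ := hg.hasRightInverse
  -- uniqueness mod all powers
  have haus : ∀ b b' : B, (∀ n : ℕ, b - b' ∈ J ^ (n + 1)) → b = b' := by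
    intro b b' h
    have := IsAdicComplete.toIsHausdorff (I := J) (M := B)
    have h0 : ∀ n : ℕ, b - b' ≡ 0 [SMOD (J ^ n • ⊤ : Submodule B B)] := by
      intro n
      rw [SModEq.zero, hst]
      exact Ideal.pow_le_pow_right (Nat.le_succ n) (h n)
    have := this.haus (b - b') h0
    exact sub_eq_zero.mp this
  -- the defining predicate
  set P : Perfection C p → B → Prop :=
    fun a b => ∀ (n : ℕ) (y : B), g y = Perfection.coeff C p n a →
      b - y ^ p ^ n ∈ J ^ (n + 1) with hPdef
  have Puniq : ∀ a b b', P a b → P a b' → b = b' := by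
    intro a b b' h h'
    refine haus b b' fun n => ?_
    have h1 := h n (s (Perfection.coeff C p n a)) (hs _)
    have h2 := h' n (s (Perfection.coeff C p n a)) (hs _)
    simpa using sub_mem h1 h2
  -- existence of the value
  have Pex : ∀ a, ∃ b, P a b := by
    intro a
    set z : ℕ → B := fun n => s (Perfection.coeff C p n a) ^ p ^ n with hz
    -- successive differences
    have hstep : ∀ n : ℕ, z n - z (n + 1) ∈ J ^ (n + 1) := by
      intro n
      have : z (n + 1) = (s (Perfection.coeff C p (n + 1) a) ^ p) ^ p ^ n := by
        rw [hz, ← pow_mul, ← pow_succ']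
      rw [this, hz]
      refine key _ _ n ?_
      rw [hs, map_pow, hs, Perfection.coeff_pow_p']
    have hdiff : ∀ (n k : ℕ), z n - z (n + k) ∈ J ^ (n + 1) := by
      intro n k
      induction k with
      | zero => simp
      | succ k ih =>
        have h2 := Ideal.pow_le_pow_right (by omega : n + 1 ≤ n + k + 1) (hstep (n + k))
        have := add_mem ih h2
        simpa [← Nat.add_assoc, sub_add_sub_cancel] using this
    have hcauchy : ∀ {m n : ℕ}, m ≤ n → z m ≡ z n [SMOD (J ^ m • ⊤ : Submodule B B)] := by
      intro m n hmn
      rw [SModEq.sub_mem, hst]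
      obtain ⟨k, rfl⟩ := Nat.exists_eq_add_of_le hmn
      exact Ideal.pow_le_pow_right (Nat.le_succ m) (hdiff m k)
    obtain ⟨L, hL⟩ := IsAdicComplete.toIsPrecomplete.prec hcauchy
    refine ⟨L, fun n y hy => ?_⟩
    have h1 : L - z (n + 1) ∈ J ^ (n + 1) := by
      have := hL (n + 1)
      rw [SModEq.sub_mem, hst] at this
      simpa using neg_mem this
    have h2 : z (n + 1) - y ^ p ^ n ∈ J ^ (n + 1) := by
      have : z (n + 1) = (s (Perfection.coeff C p (n + 1) a) ^ p) ^ p ^ n := by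
        rw [hz, ← pow_mul, ← pow_succ']
      rw [this]
      refine key _ _ n ?_
      rw [map_pow, hs, Perfection.coeff_pow_p', hy]
    simpa [sub_add_sub_cancel] using add_mem h1 h2
  choose F hF using Pex
  -- F is multiplicative and additive
  have hFone : F 1 = 1 := by
    refine Puniq 1 (F 1) 1 (hF 1) ?_
    intro n y hy
    have : (1 : B) - y ^ p ^ n = -(y ^ p ^ n - 1 ^ p ^ n) := by ring
    rw [this]
    exact neg_mem (key y 1 n (by simpa using hy))
  have hFmul : ∀ a a', F (a * a') = F a * F a' := by
    intro a a'
    refine (Puniq (a * a') (F (a * a')) (F a * F a') (hF _) ?_).symm ▸ rfl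
    intro n y hy
    set y1 := s (Perfection.coeff C p n a)
    set y2 := s (Perfection.coeff C p n a')
    have h1 := hF a n y1 (hs _)
    have h2 := hF a' n y2 (hs _)
    have h3 : (y1 * y2) ^ p ^ n - y ^ p ^ n ∈ J ^ (n + 1) := by
      refine key _ _ n ?_
      rw [map_mul, hs, hs, hy, map_mul]
    have heq : F a * F a' - y ^ p ^ n =
        (F a - y1 ^ p ^ n) * (F a' - y2 ^ p ^ n)
        + (F a - y1 ^ p ^ n) * (y2 ^ p ^ n) + (y1 ^ p ^ n) * (F a' - y2 ^ p ^ n)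
        + ((y1 * y2) ^ p ^ n - y ^ p ^ n) := by
      rw [mul_pow]; ring
    rw [heq]
    refine add_mem (add_mem (add_mem ?_ ?_) ?_) h3
    · exact Ideal.mul_mem_right _ _ h1
    · exact Ideal.mul_mem_right _ _ h1
    · exact Ideal.mul_mem_left _ _ h2
  have hFadd : ∀ a a', F (a + a') = F a + F a' := by
    intro a a'
    refine (Puniq (a + a') (F (a + a')) (F a + F a') (hF _) ?_).symm ▸ rfl
    intro n y hy
    set y1 := s (Perfection.coeff C p n a)
    set y2 := s (Perfection.coeff C p n a')
    have h1 := hF a n y1 (hs _)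
    have h2 := hF a' n y2 (hs _)
    have h3 : (y1 + y2) ^ p ^ n - y ^ p ^ n ∈ J ^ (n + 1) := by
      refine key _ _ n ?_
      rw [map_add, hs, hs, hy, map_add]
    have heq : F a + F a' - y ^ p ^ n =
        (F a - y1 ^ p ^ n) + (F a' - y2 ^ p ^ n) + ((y1 + y2) ^ p ^ n - y ^ p ^ n) := by
      rw [add_pow_char_pow]; ring
    rw [heq]
    exact add_mem (add_mem h1 h2) h3
  -- assemble the ring hom
  set f : Perfection C p →+* B :=
    RingHom.mk' { toFun := F, map_one' := hFone, map_mul' := hFmul } hFadd with hf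
  have hfP : ∀ a, P a (f a) := fun a => hF a
  have hgf : ∀ a, g (f a) = Perfection.coeff C p 0 a := by
    intro a
    have := hfP a 0 (s (Perfection.coeff C p 0 a)) (hs _)
    rw [pow_zero, pow_one, pow_one] at this
    rw [hJ, RingHom.mem_ker, map_sub, sub_eq_zero] at this
    rw [this, hs]
  refine ⟨f, ⟨fun a n y hy => hfP a n y hy, hgf⟩, ?_⟩
  intro f' ⟨hf'1, _⟩
  ext a
  exact Puniq a (f' a) (f a) (fun n y hy => hf'1 a n y hy) (hfP a)
end

section
/- Let p be a prime number and let C be a commutative ring of characteristic p with inverse limit perfection C^♭ = lim_φ C and projections coeff_n : C^♭ → C. The ring homomorphisms W(coeff_n) : W(C^♭) → W(C) of p-typical Witt vector rings satisfy F ∘ W(coeff_{n+1}) = W(coeff_n) for all n, where F is the Witt vector Frobenius of W(C), and the induced ring homomorphism from W(C^♭) to the subring of ∏_{n∈ℕ} W(C) consisting of all sequences s with F(s_{n+1}) = s_n for all n is bijective. -/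
/-- For `p` prime and `C` a commutative ring of characteristic `p`, the ring homomorphisms
`W(coeff_n) : W(C^♭) → W(C)` satisfy `F ∘ W(coeff_{n+1}) = W(coeff_n)` (where `F` is the
Witt vector Frobenius), and the induced map from `W(C^♭)` to the subring
`lim_F W(C) ⊆ ∏_n W(C)` of Frobenius-compatible sequences is bijective. -/
theorem stmt10 (p : ℕ) [Fact p.Prime] {C : Type*} [CommRing C] [CharP C p] :
    (∀ n : ℕ,
      (WittVector.frobenius (p := p) (R := C)).comp
          (WittVector.map (Perfection.coeff C p (n + 1)))
        = WittVector.map (Perfection.coeff C p n)) ∧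
    Function.Injective
      (fun (x : WittVector p (Ring.Perfection C p)) (n : ℕ) =>
        WittVector.map (Perfection.coeff C p n) x) ∧
    Set.range
      (fun (x : WittVector p (Ring.Perfection C p)) (n : ℕ) =>
        WittVector.map (Perfection.coeff C p n) x)
      = {s : ℕ → WittVector p C |
          ∀ n : ℕ, WittVector.frobenius (p := p) (R := C) (s (n + 1)) = s n} := by
  have hcompat : ∀ (n : ℕ) (x : WittVector p (Ring.Perfection C p)),
      WittVector.frobenius (WittVector.map (Perfection.coeff C p (n + 1)) x)
        = WittVector.map (Perfection.coeff C p n) x := by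
    intro n x
    apply WittVector.ext
    intro k
    rw [WittVector.coeff_frobenius_charP]
    exact Perfection.coeff_pow_p' _ _
  refine ⟨fun n => RingHom.ext fun x => hcompat n x, ?_, ?_⟩
  · intro x y h
    simp only [funext_iff] at h
    apply WittVector.ext
    intro k
    apply Perfection.ext
    intro n
    have := congrArg (fun w => WittVector.coeff w k) (h n)
    exact this
  · ext s
    constructor
    · rintro ⟨x, rfl⟩ n
      exact hcompat n x
    · intro hs
      refine ⟨WittVector.mk p (fun k => ⟨fun n => (s n).coeff k, fun n => ?_⟩), ?_⟩
      · have := congrArg (fun w => WittVector.coeff w k) (hs n)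
        simpa only [WittVector.coeff_frobenius_charP] using this
      · funext n
        apply WittVector.ext
        intro k
        rfl
end
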